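/- Let d be a positive integer and ρ ≥ 1, and let Φ_{d,ρ} be the unique positive root of ρ(x+1)^d = x^{d+1}. Then Φ_{d,ρ}^{d+1} ≤ (d / W(d/ρ))^{d+1}, where W is the principal branch of the Lambert-W function. -/

import Mathlib

theorem poa_lambertW_bound (d : ℕ) (hd : 0 < d) (ρ : ℝ) (hρ : 1 ≤ ρ)
    (Φ W : ℝ) (hΦpos : 0 < Φ) (hΦ : ρ * (Φ + 1) ^ d = Φ ^ (d + 1))
    (hWpos : 0 ≤ W) (hW : W * Real.exp W = d / ρ) :
    Φ ^ (d + 1) ≤ ((d : ℝ) / W) ^ (d + 1) := by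
  have hρ0 : (0:ℝ) < ρ := lt_of_lt_of_le one_pos hρ
  have hd0 : (0:ℝ) < d := by exact_mod_cast hd
  have hW0 : 0 < W := by
    rcases hWpos.lt_or_eq with h | h
    · exact h
    · exfalso
      rw [← h] at hW
      simp at hW
      have := div_pos hd0 hρ0
      linarith
  set x₀ : ℝ := d / W with hx₀
  have hx₀pos : 0 < x₀ := div_pos hd0 hW0
  have hE : 0 < Real.exp W := Real.exp_pos W
  have hρ_eq : ρ = d / (W * Real.exp W) := by
    rw [hW]
    field_simp
  have h1 : (W + d) ^ d ≤ d ^ d * Real.exp W := by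
    have heq : W + (d:ℝ) = d * (1 + W / d) := by field_simp; ring
    calc (W + (d:ℝ)) ^ d = (d:ℝ) ^ d * (1 + W / d) ^ d := by rw [heq, mul_pow]
      _ ≤ (d:ℝ) ^ d * Real.exp (W / d) ^ d := by
          gcongr
          linarith [Real.add_one_le_exp (W / d)]
      _ = (d:ℝ) ^ d * Real.exp W := by
          rw [← Real.exp_nat_mul]
          congr 1
          field_simp
  have key : ρ * (x₀ + 1) ^ d ≤ x₀ ^ (d + 1) := by
    rw [hρ_eq, hx₀]
    have hrw : (d / (W * Real.exp W)) * ((d / W) + 1) ^ d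
        = d * (W + d) ^ d / (Real.exp W * W ^ (d + 1)) := by
      rw [div_add' _ _ _ hW0.ne', div_pow]
      field_simp
      ring
    rw [hrw, div_pow, div_le_div_iff₀ (by positivity) (by positivity)]
    calc (d:ℝ) * (W + d) ^ d * W ^ (d + 1)
        ≤ (d:ℝ) * ((d:ℝ) ^ d * Real.exp W) * W ^ (d + 1) := by
          gcongr
      _ = (d:ℝ) ^ (d + 1) * (Real.exp W * W ^ (d + 1)) := by
          rw [pow_succ]; ring
  have hle : Φ ≤ x₀ := by
    by_contra h
    push_neg at h
    have h2 : Φ ^ (d + 1) * (x₀ + 1) ^ d ≤ x₀ ^ (d + 1) * (Φ + 1) ^ d := by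
      calc Φ ^ (d + 1) * (x₀ + 1) ^ d = (ρ * (x₀ + 1) ^ d) * (Φ + 1) ^ d := by
            rw [← hΦ]; ring
        _ ≤ x₀ ^ (d + 1) * (Φ + 1) ^ d :=
            mul_le_mul_of_nonneg_right key (by positivity)
    have ha : x₀ * (Φ + 1) < Φ * (x₀ + 1) := by nlinarith
    have hb : (x₀ * (Φ + 1)) ^ d ≤ (Φ * (x₀ + 1)) ^ d :=
      pow_le_pow_left₀ (by positivity) ha.le d
    have h3 : x₀ ^ (d + 1) * (Φ + 1) ^ d < Φ ^ (d + 1) * (x₀ + 1) ^ d := by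
      calc x₀ ^ (d + 1) * (Φ + 1) ^ d = x₀ * (x₀ * (Φ + 1)) ^ d := by
            rw [mul_pow, pow_succ]; ring
        _ < Φ * (Φ * (x₀ + 1)) ^ d := by
            have hA : 0 < (x₀ * (Φ + 1)) ^ d := by positivity
            calc x₀ * (x₀ * (Φ + 1)) ^ d < Φ * (x₀ * (Φ + 1)) ^ d :=
                  mul_lt_mul_of_pos_right h hA
              _ ≤ Φ * (Φ * (x₀ + 1)) ^ d :=
                  mul_le_mul_of_nonneg_left hb hΦpos.le
        _ = Φ ^ (d + 1) * (x₀ + 1) ^ d := by rw [mul_pow, pow_succ]; ring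
    linarith
  exact pow_le_pow_left₀ hΦpos.le hle _
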